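/- In the cyclic module A/(u−1)A with u = e^{−iα}a_{pq}, gcd(p,q)=1, the vectors ξ·a_{jk} (ξ the class of 1) are eigenvectors of right multiplication by u with eigenvalue e^{iλ(jq − kp)}, and ξ·a_{j+p,k+q} = e^{i(α − λkp)} ξ·a_{jk}. Consequently, after rescaling, the module has a basis indexed by ℤ²/(p,q)ℤ, which via [j,k] ↦ jq − kp is in bijection with ℤ. -/

import Mathlib

open MulOpposite

theorem rotationAlgebra_cyclic_module_basis
    (lam : ℝ) (hlam : Irrational (lam / (2 * Real.pi)))
    (A : Type) [Ring A] [Algebra ℂ A]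
    (a : ℤ → ℤ → A)
    (b : Module.Basis (ℤ × ℤ) ℂ A) (hb : ∀ n l : ℤ, b (n, l) = a n l)
    (hmul : ∀ n₁ l₁ n₂ l₂ : ℤ,
      a n₁ l₁ * a n₂ l₂ =
        Complex.exp (Complex.I * (lam * n₁ * l₂)) • a (n₁ + n₂) (l₁ + l₂))
    (α : ℝ) (p q : ℤ) (hpq : Int.gcd p q = 1)
    (u : A) (hu : u = Complex.exp (-(Complex.I * α)) • a p q)
    (I : Submodule Aᵐᵒᵖ A) (hI : I = Submodule.span Aᵐᵒᵖ ({u - 1} : Set A)) :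
    (∀ j k : ℤ,
      (op u) • (Submodule.Quotient.mk (a j k) : A ⧸ I) =
        Submodule.Quotient.mk
          (Complex.exp (Complex.I * (lam * (j * q - k * p))) • a j k)) ∧
    (∀ j k : ℤ,
      (Submodule.Quotient.mk (a (j + p) (k + q)) : A ⧸ I) =
        Submodule.Quotient.mk
          (Complex.exp (Complex.I * (α - lam * k * p)) • a j k)) ∧
    (∃ (c : ℤ → ℤ → ℂ) (ξ : Module.Basis ℤ ℂ (A ⧸ I)),
      ∀ j k : ℤ, ‖c j k‖ = 1 ∧
        ξ (j * q - k * p) =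
          Submodule.Quotient.mk ((c j k) • a j k)) := by
  classical
  -- Bezout coefficients
  obtain ⟨x, y, hxy⟩ : ∃ x y : ℤ, q * x - p * y = 1 := by
    obtain ⟨s, t, hst⟩ := Int.isCoprime_iff_gcd_eq_one.mpr hpq
    exact ⟨t, -s, by linarith⟩
  -- membership of right multiples of (u-1)
  have hmem : ∀ r : A, (u - 1) * r ∈ I := by
    intro r
    rw [hI, ← op_smul_eq_mul]
    exact Submodule.smul_mem _ (op r) (Submodule.subset_span (Set.mem_singleton _))
  have hCsmul : ∀ (z : ℂ) (w : A), w ∈ I → z • w ∈ I := by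
    intro z w hw
    rw [hI] at hw
    obtain ⟨r, hr⟩ := Submodule.mem_span_singleton.mp hw
    rw [← hr, ← op_unop r, op_smul_eq_mul, ← mul_smul_comm]
    exact hmem _
  -- multiplication formulas
  have hua : ∀ j k : ℤ,
      u * a j k = Complex.exp (Complex.I * ((lam * (p * k) : ℝ) - (α : ℝ))) • a (j + p) (k + q) := by
    intro j k
    rw [hu, smul_mul_assoc, hmul, add_comm p j, add_comm q k, smul_smul, ← Complex.exp_add]
    congr 2
    push_cast
    ring
  have hau : ∀ j k : ℤ,
      a j k * u = Complex.exp (Complex.I * ((lam * (j * q) : ℝ) - (α : ℝ))) • a (j + p) (k + q) := by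
    intro j k
    rw [hu, mul_smul_comm, hmul, smul_smul, ← Complex.exp_add]
    congr 2
    push_cast
    ring
  -- the step relation
  have hIstep : ∀ j k : ℤ,
      a (j + p) (k + q) - Complex.exp (Complex.I * (α - lam * k * p)) • a j k ∈ I := by
    intro j k
    have heq : (u - 1) * (Complex.exp (Complex.I * (α - lam * k * p)) • a j k)
        = a (j + p) (k + q) - Complex.exp (Complex.I * (α - lam * k * p)) • a j k := by
      rw [sub_mul, one_mul, mul_smul_comm, hua j k, smul_smul, ← Complex.exp_add]
      congr 1
      convert one_smul ℂ (a (j + p) (k + q)) using 2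
      rw [← Complex.exp_zero]
      congr 1
      push_cast
      ring
    rw [← heq]; exact hmem _
  refine ⟨?_, ?_, ?_⟩
  · -- part 1
    intro j k
    rw [← Submodule.Quotient.mk_smul, op_smul_eq_mul, Submodule.Quotient.eq]
    have heq : a j k * u - Complex.exp (Complex.I * (lam * (j * q - k * p))) • a j k
        = (u - 1) * (Complex.exp (Complex.I * (lam * (j * q - k * p))) • a j k) := by
      rw [sub_mul, one_mul, mul_smul_comm, hua j k, smul_smul, ← Complex.exp_add, hau j k]
      congr 3
      push_cast
      ring
    rw [heq]; exact hmem _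
  · -- part 2
    intro j k
    rw [Submodule.Quotient.eq]
    exact hIstep j k
  · -- part 3
    set fR : ℤ → ℤ → ℝ := fun j k =>
      ((k*x - j*y : ℤ) : ℝ) * α - lam * p * (((k*x - j*y : ℤ) : ℝ) * ((j*q - k*p : ℤ) : ℝ) * y
        + q * (((k*x - j*y : ℤ) : ℝ) * (((k*x - j*y : ℤ) : ℝ) - 1) / 2)) with hfR
    have hf : ∀ j k : ℤ, fR (j+p) (k+q) = fR j k + (α - lam * (k * p)) := by
      intro j k
      have ht1 : (k+q)*x - (j+p)*y = (k*x - j*y) + 1 := by linear_combination hxy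
      have hm1 : (j+p)*q - (k+q)*p = j*q - k*p := by ring
      have hk2 : ((j:ℝ)*q - (k:ℝ)*p) * (y:ℝ) + ((k:ℝ)*x - (j:ℝ)*y) * (q:ℝ) = (k:ℝ) := by
        have h0 : (j*q - k*p)*y + (k*x - j*y)*q = k := by linear_combination k * hxy
        exact_mod_cast congrArg (Int.cast : ℤ → ℝ) h0
      simp only [hfR, ht1, hm1]
      push_cast
      linear_combination (-(lam * (p:ℝ))) * hk2
    set d : ℤ → ℤ → ℂ := fun j k => Complex.exp (Complex.I * (fR j k)) with hd
    set c : ℤ → ℤ → ℂ := fun j k => Complex.exp (-(Complex.I * (fR j k))) with hc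
    have hcd : ∀ j k : ℤ, d j k * c j k = 1 := by
      intro j k
      simp only [hd, hc]
      rw [← Complex.exp_add, add_neg_cancel, Complex.exp_zero]
    have habs : ∀ j k : ℤ, ‖c j k‖ = 1 := by
      intro j k
      simp [hc, Complex.norm_exp]
    have hdstep : ∀ j k : ℤ, d (j+p) (k+q) = Complex.exp (Complex.I * (α - lam * k * p)) * d j k := by
      intro j k
      simp only [hd]
      rw [← Complex.exp_add]
      congr 1
      rw [hf j k]
      push_cast
      ring
    have hcstep : ∀ j k : ℤ, c (j+p) (k+q) * Complex.exp (Complex.I * (α - lam * k * p)) = c j k := by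
      intro j k
      simp only [hc]
      rw [← Complex.exp_add]
      congr 1
      rw [hf j k]
      push_cast
      ring
    have hstep' : ∀ j k : ℤ, c (j+p) (k+q) • a (j+p) (k+q) - c j k • a j k ∈ I := by
      intro j k
      have h2 := hCsmul (c (j+p) (k+q)) _ (hIstep j k)
      rwa [smul_sub, smul_smul, hcstep j k] at h2
    have hchain : ∀ mm n : ℤ,
        c (mm*x + n*p) (mm*y + n*q) • a (mm*x + n*p) (mm*y + n*q)
          - c (mm*x) (mm*y) • a (mm*x) (mm*y) ∈ I := by
      intro mm n
      induction n using Int.induction_on with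
      | zero => simp
      | succ n ih =>
          have hst := hstep' (mm*x + n*p) (mm*y + n*q)
          have e1 : mm*x + (n:ℤ)*p + p = mm*x + ((n:ℤ)+1)*p := by ring
          have e2 : mm*y + (n:ℤ)*q + q = mm*y + ((n:ℤ)+1)*q := by ring
          rw [e1, e2] at hst
          have h3 := Submodule.add_mem I hst ih
          rwa [sub_add_sub_cancel] at h3
      | pred n ih =>
          have hst := hstep' (mm*x + (-(n:ℤ)-1)*p) (mm*y + (-(n:ℤ)-1)*q)
          have e1 : mm*x + (-(n:ℤ)-1)*p + p = mm*x + (-(n:ℤ))*p := by ring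
          have e2 : mm*y + (-(n:ℤ)-1)*q + q = mm*y + (-(n:ℤ))*q := by ring
          rw [e1, e2] at hst
          have h3 := Submodule.sub_mem I ih hst
          have e3 : (c (mm*x + (-(n:ℤ))*p) (mm*y + (-(n:ℤ))*q) • a (mm*x + (-(n:ℤ))*p) (mm*y + (-(n:ℤ))*q)
                - c (mm*x) (mm*y) • a (mm*x) (mm*y))
              - (c (mm*x + (-(n:ℤ))*p) (mm*y + (-(n:ℤ))*q) • a (mm*x + (-(n:ℤ))*p) (mm*y + (-(n:ℤ))*q)
                - c (mm*x + (-(n:ℤ)-1)*p) (mm*y + (-(n:ℤ)-1)*q) • a (mm*x + (-(n:ℤ)-1)*p) (mm*y + (-(n:ℤ)-1)*q))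
              = c (mm*x + (-(n:ℤ)-1)*p) (mm*y + (-(n:ℤ)-1)*q) • a (mm*x + (-(n:ℤ)-1)*p) (mm*y + (-(n:ℤ)-1)*q)
                - c (mm*x) (mm*y) • a (mm*x) (mm*y) := by abel
          rwa [e3] at h3
    have hL : ∀ j k : ℤ,
        c j k • a j k - c ((j*q - k*p)*x) ((j*q - k*p)*y) • a ((j*q - k*p)*x) ((j*q - k*p)*y) ∈ I := by
      intro j k
      have hj : (j*q - k*p)*x + (k*x - j*y)*p = j := by linear_combination j * hxy
      have hk2 : (j*q - k*p)*y + (k*x - j*y)*q = k := by linear_combination k * hxy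
      have h := hchain (j*q - k*p) (k*x - j*y)
      rwa [hj, hk2] at h
    set v : ℤ → A := fun n => c (n*x) (n*y) • a (n*x) (n*y) with hv
    set G : (ℤ →₀ ℂ) →ₗ[ℂ] A := Finsupp.linearCombination ℂ v with hG
    set F : A →ₗ[ℂ] (ℤ →₀ ℂ) :=
      b.constr ℂ (fun jk => d jk.1 jk.2 • Finsupp.single (jk.1*q - jk.2*p) (1:ℂ)) with hF
    have hFa : ∀ j k : ℤ, F (a j k) = d j k • Finsupp.single (j*q - k*p) (1:ℂ) := by
      intro j k
      rw [← hb j k, hF]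
      exact b.constr_basis ℂ _ (j, k)
    have hGs : ∀ n : ℤ, G (Finsupp.single n (1:ℂ)) = v n := by
      intro n
      rw [hG, Finsupp.linearCombination_single, one_smul]
    set mkC : A →ₗ[ℂ] A ⧸ I :=
      { toFun := fun w => Submodule.Quotient.mk w
        map_add' := fun w₁ w₂ => rfl
        map_smul' := fun z w => Submodule.Quotient.mk_smul I z w } with hmkC
    have hT : F.comp (LinearMap.mulLeft ℂ (u - 1)) = 0 := by
      apply b.ext
      rintro ⟨j, k⟩
      rw [LinearMap.comp_apply, LinearMap.mulLeft_apply, LinearMap.zero_apply, hb]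
      rw [sub_mul, one_mul, hua j k, map_sub, map_smul, hFa (j+p) (k+q), hFa j k]
      have hind : (j+p)*q - (k+q)*p = j*q - k*p := by ring
      rw [hind, smul_smul, hdstep j k, ← mul_assoc, ← Complex.exp_add]
      rw [sub_eq_zero]
      congr 1
      convert one_mul (d j k) using 2
      rw [← Complex.exp_zero]
      congr 1
      push_cast
      ring
    have hFI : ∀ w ∈ I, F w = 0 := by
      intro w hw
      rw [hI] at hw
      obtain ⟨r, hr⟩ := Submodule.mem_span_singleton.mp hw
      rw [← hr, ← op_unop r, op_smul_eq_mul]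
      have h2 := DFunLike.congr_fun hT (unop r)
      simpa using h2
    have hFG : ∀ z : ℤ →₀ ℂ, F (G z) = z := by
      have hcomp : F.comp G = LinearMap.id := by
        apply Finsupp.lhom_ext
        intro n zz
        rw [LinearMap.comp_apply, LinearMap.id_apply]
        have h1 : (Finsupp.single n zz) = zz • Finsupp.single n (1:ℂ) := by
          rw [Finsupp.smul_single, smul_eq_mul, mul_one]
        rw [h1, map_smul, map_smul, hGs, hv]
        dsimp only
        rw [map_smul, hFa, smul_smul, smul_smul, mul_assoc,
          mul_comm (c (n*x) (n*y)) (d (n*x) (n*y)), hcd (n*x) (n*y), mul_one]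
        have hind2 : (n*x)*q - (n*y)*p = n := by linear_combination n * hxy
        rw [hind2, ← h1]
      intro z
      exact DFunLike.congr_fun hcomp z
    have hGFmem : ∀ w : A, w - G (F w) ∈ I := by
      have hz : mkC.comp (LinearMap.id - G.comp F) = 0 := by
        apply b.ext
        rintro ⟨j, k⟩
        rw [LinearMap.comp_apply, LinearMap.sub_apply, LinearMap.id_apply, LinearMap.comp_apply,
          LinearMap.zero_apply, hb]
        show Submodule.Quotient.mk (a j k - G (F (a j k))) = 0
        rw [Submodule.Quotient.mk_eq_zero]
        rw [hFa, map_smul, hGs, hv]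
        dsimp only
        rw [smul_smul]
        have h := hCsmul (d j k) _ (hL j k)
        rwa [smul_sub, smul_smul, smul_smul, hcd j k, one_smul] at h
      intro w
      have h2 := DFunLike.congr_fun hz w
      simp only [LinearMap.comp_apply, LinearMap.sub_apply, LinearMap.id_apply,
        LinearMap.zero_apply] at h2
      show w - G (F w) ∈ I
      rwa [← Submodule.Quotient.mk_eq_zero I]
    have hinj : Function.Injective (mkC.comp G) := by
      refine (injective_iff_map_eq_zero _).mpr ?_
      intro z hz0
      have hmem0 : G z ∈ I := by
        rwa [LinearMap.comp_apply, show mkC (G z) = Submodule.Quotient.mk (G z) from rfl,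
          Submodule.Quotient.mk_eq_zero] at hz0
      have h2 := hFI _ hmem0
      rwa [hFG z] at h2
    have hsurj : Function.Surjective (mkC.comp G) := by
      intro w
      obtain ⟨wa, rfl⟩ := Submodule.Quotient.mk_surjective I w
      refine ⟨F wa, ?_⟩
      rw [LinearMap.comp_apply]
      show Submodule.Quotient.mk (G (F wa)) = Submodule.Quotient.mk wa
      rw [Submodule.Quotient.eq]
      have h2 := Submodule.neg_mem I (hGFmem wa)
      rwa [neg_sub] at h2
    set e := LinearEquiv.ofBijective (mkC.comp G) ⟨hinj, hsurj⟩ with he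
    refine ⟨fun j k => c j k, Module.Basis.ofRepr e.symm, ?_⟩
    intro j k
    refine ⟨habs j k, ?_⟩
    have hx1 : (Module.Basis.ofRepr e.symm) (j*q - k*p) = e (Finsupp.single (j*q - k*p) (1:ℂ)) := by
      rw [Module.Basis.coe_ofRepr]
      simp
    rw [hx1]
    have hx2 : e (Finsupp.single (j*q - k*p) (1:ℂ))
        = Submodule.Quotient.mk (v (j*q - k*p)) := by
      show (mkC.comp G) (Finsupp.single (j*q - k*p) (1:ℂ)) = _
      rw [LinearMap.comp_apply, hGs]
      rfl
    rw [hx2, hv]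
    dsimp only
    exact ((Submodule.Quotient.eq I).mpr (hL j k)).symm
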